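/- Block shifting lemma: consider a schedule of unit jobs (an injective assignment S of jobs to integer time slots with S(j) ≥ r_j, all release times r_j distinct). Let B = [u,v] be a block of the schedule (a maximal interval of busy slots), and suppose the job scheduled at slot v has release time strictly less than v. Then there exists a schedule of the same jobs occupying exactly the slots [u−1, v−1] ∪ (busy slots outside B), i.e., the block B can be shifted left by one slot. -/
import Mathlib

private lemma aux_shift (k : ℕ) : ∀ (n : ℕ) (r : Fin n → ℤ), Function.Injective r →
    ∀ (S : Fin n → ℤ), Function.Injective S → (∀ j, r j ≤ S j) →
    ∀ (u v : ℤ), v = u + k →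
    (∀ t : ℤ, u ≤ t → t ≤ v → ∃ j, S j = t) →
    (∀ j, S j ≠ u - 1) →
    ∀ (j₀ : Fin n), S j₀ = v → r j₀ < v →
    ∃ S' : Fin n → ℤ, Function.Injective S' ∧ (∀ j, r j ≤ S' j) ∧
      (∀ j, (S j < u ∨ v < S j) → S' j = S j) ∧
      (∀ j, u ≤ S j → S j ≤ v → u - 1 ≤ S' j ∧ S' j ≤ v - 1) := by
  induction k with
  | zero =>
    intro n r hr S hS hfeas u v hk hbusy hleft j₀ hj₀ hrj₀
    refine ⟨Function.update S j₀ (u - 1), ?_, ?_, ?_, ?_⟩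
    · intro a b hab
      simp only [Function.update_apply] at hab
      by_cases ha : a = j₀ <;> by_cases hb : b = j₀ <;> simp [ha, hb] at hab ⊢
      · exact absurd hab.symm (hleft b)
      · exact absurd hab (hleft a)
      · exact hS hab
    · intro j
      rcases eq_or_ne j j₀ with h | h
      · subst h; simp only [Function.update_self]; omega
      · simp only [Function.update_of_ne h]; exact hfeas j
    · intro j hj
      have : j ≠ j₀ := by rintro rfl; omega
      simp [Function.update_of_ne this]
    · intro j h1 h2
      have : j = j₀ := hS (by omega)
      subst this
      simp only [Function.update_self]; omega
  | succ m ih =>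
    intro n r hr S hS hfeas u v hk hbusy hleft j₀ hj₀ hrj₀
    have huv1 : u ≤ v - 1 := by omega
    obtain ⟨j₁, hj₁⟩ := hbusy (v - 1) huv1 (by omega)
    have hne : j₀ ≠ j₁ := by rintro rfl; omega
    have hrj₁ : r j₁ ≤ v - 1 := by have := hfeas j₁; omega
    rcases lt_or_eq_of_le hrj₁ with hlt | heq
    · -- job at v-1 can move: shift block [u, v-1] then put j₀ at v-1
      obtain ⟨S'', hinj, hfeas'', hout, hin⟩ :=
        ih n r hr S hS hfeas u (v - 1) (by omega)
          (fun t ht1 ht2 => hbusy t ht1 (by omega)) hleft j₁ hj₁ hlt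
      have hS''j₀ : S'' j₀ = v := by rw [hout j₀ (Or.inr (by omega)), hj₀]
      have hkey : ∀ b, b ≠ j₀ → S'' b ≠ v - 1 := by
        intro b hb
        rcases lt_or_ge (S b) u with h | h
        · rw [hout b (Or.inl h)]; omega
        · rcases le_or_gt (S b) (v - 1) with h2 | h2
          · have := hin b h h2; omega
          · have hne' : S b ≠ v := fun hco => hb (hS (hco.trans hj₀.symm))
            rw [hout b (Or.inr (by omega))]; omega
      refine ⟨Function.update S'' j₀ (v - 1), ?_, ?_, ?_, ?_⟩
      · intro a b hab
        simp only [Function.update_apply] at hab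
        by_cases ha : a = j₀ <;> by_cases hb : b = j₀ <;> simp [ha, hb] at hab ⊢
        · exact absurd hab.symm (hkey b hb)
        · exact absurd hab (hkey a ha)
        · exact hinj hab
      · intro j
        rcases eq_or_ne j j₀ with h | h
        · subst h; simp only [Function.update_self]; omega
        · simp only [Function.update_of_ne h]; exact hfeas'' j
      · intro j hj
        have hne' : j ≠ j₀ := by rintro rfl; omega
        rw [Function.update_of_ne hne']
        exact hout j (by omega)
      · intro j h1 h2
        rcases eq_or_ne j j₀ with h | h
        · subst h; simp only [Function.update_self]; omega
        · rw [Function.update_of_ne h]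
          have : S j ≤ v - 1 := by
            rcases lt_or_eq_of_le h2 with h' | h'
            · omega
            · exact absurd (hS (h'.trans hj₀.symm)) h
          have := hin j h1 this; omega
    · -- job at v-1 is stuck (r j₁ = v-1); swap j₀ and j₁ first
      have hrj₀' : r j₀ < v - 1 := by
        have : r j₀ ≠ v - 1 := fun hco => hne (hr (hco.trans heq.symm))
        omega
      set T : Fin n → ℤ := S ∘ (Equiv.swap j₀ j₁) with hT
      have hTinj : Function.Injective T := hS.comp (Equiv.swap j₀ j₁).injective
      have hTj₀ : T j₀ = v - 1 := by simp [hT, Equiv.swap_apply_left, hj₁]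
      have hTj₁ : T j₁ = v := by simp [hT, Equiv.swap_apply_right, hj₀]
      have hTother : ∀ j, j ≠ j₀ → j ≠ j₁ → T j = S j := by
        intro j h0 h1; simp [hT, Equiv.swap_apply_of_ne_of_ne h0 h1]
      have hTfeas : ∀ j, r j ≤ T j := by
        intro j
        rcases eq_or_ne j j₀ with h | h
        · subst h; omega
        rcases eq_or_ne j j₁ with h' | h'
        · subst h'; rw [hTj₁]; omega
        · rw [hTother j h h']; exact hfeas j
      have hTbusy : ∀ t : ℤ, u ≤ t → t ≤ v - 1 → ∃ j, T j = t := by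
        intro t ht1 ht2
        obtain ⟨j, hj⟩ := hbusy t ht1 (by omega)
        exact ⟨Equiv.swap j₀ j₁ j, by simp [hT, Equiv.swap_apply_self, hj]⟩
      have hTleft : ∀ j, T j ≠ u - 1 := fun j => hleft _
      obtain ⟨S'', hinj, hfeas'', hout, hin⟩ :=
        ih n r hr T hTinj hTfeas u (v - 1) (by omega) hTbusy hTleft j₀ hTj₀ hrj₀'
      have hS''j₁ : S'' j₁ = v := by rw [hout j₁ (Or.inr (by omega)), hTj₁]
      have hkey : ∀ b, b ≠ j₁ → S'' b ≠ v - 1 := by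
        intro b hb
        rcases eq_or_ne b j₀ with h | h
        · have := hin b (by rw [h, hTj₀]; omega) (by rw [h, hTj₀]); omega
        · have hTb : T b = S b := hTother b h hb
          rcases lt_or_ge (S b) u with h2 | h2
          · rw [hout b (Or.inl (by omega))]; omega
          · rcases le_or_gt (S b) (v - 1) with h3 | h3
            · have := hin b (by omega) (by omega); omega
            · have : S b ≠ v := fun hco => h (hS (hco.trans hj₀.symm))
              rw [hout b (Or.inr (by omega))]; omega
      refine ⟨Function.update S'' j₁ (v - 1), ?_, ?_, ?_, ?_⟩
      · intro a b hab
        simp only [Function.update_apply] at hab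
        by_cases ha : a = j₁ <;> by_cases hb : b = j₁ <;> simp [ha, hb] at hab ⊢
        · exact absurd hab.symm (hkey b hb)
        · exact absurd hab (hkey a ha)
        · exact hinj hab
      · intro j
        rcases eq_or_ne j j₁ with h | h
        · subst h; simp only [Function.update_self]; omega
        · simp only [Function.update_of_ne h]; exact hfeas'' j
      · intro j hj
        have h1 : j ≠ j₁ := by rintro rfl; omega
        have h0 : j ≠ j₀ := by rintro rfl; omega
        have hTj := hTother j h0 h1
        rw [Function.update_of_ne h1, hout j (by rw [hTj]; omega), hTj]
      · intro j hu hv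
        rcases eq_or_ne j j₁ with h | h
        · subst h; simp only [Function.update_self]; omega
        rw [Function.update_of_ne h]
        rcases eq_or_ne j j₀ with h' | h'
        · have := hin j (by rw [h', hTj₀]; omega) (by rw [h', hTj₀]); omega
        · have hTj : T j = S j := hTother j h' h
          have : S j ≤ v - 1 := by
            have : S j ≠ v := fun hco => h' (hS (hco.trans hj₀.symm))
            omega
          have := hin j (by omega) (by omega); omega

theorem block_shift_left (n : ℕ) (r : Fin n → ℤ) (hr : Function.Injective r)
    (S : Fin n → ℤ) (hS : Function.Injective S) (hfeas : ∀ j, r j ≤ S j)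
    (u v : ℤ) (huv : u ≤ v)
    (hbusy : ∀ t : ℤ, u ≤ t → t ≤ v → ∃ j, S j = t)
    (hleft : ∀ j, S j ≠ u - 1)
    (hright : ∀ j, S j ≠ v + 1)
    (j₀ : Fin n) (hj₀ : S j₀ = v) (hrj₀ : r j₀ < v) :
    ∃ S' : Fin n → ℤ, Function.Injective S' ∧ (∀ j, r j ≤ S' j) ∧
      (∀ j, (S j < u ∨ v < S j) → S' j = S j) ∧
      (∀ j, u ≤ S j → S j ≤ v → u - 1 ≤ S' j ∧ S' j ≤ v - 1) := by
  exact aux_shift (v - u).toNat n r hr S hS hfeas u v (by omega) hbusy hleft j₀ hj₀ hrj₀
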